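/- Let p be an odd prime. For 0 ≤ t ≤ p²−1 write t = t_0·p + t_1 with 0 ≤ t_0, t_1 ≤ p−1, and for 0 ≤ i ≤ p−1 define X_i : Z_{p²} → Z_{p²} by X_i(t) = p·t_0·t_1 + p·i (mod p²), so each X_i takes values in the p-element set pZ_p = {0, p, 2p, …, (p−1)p}. Then the (p², p, p)-FHS set U = {X_0, …, X_{p−1}} over pZ_p is uniformly distributed (N_U(a) = p² for every a ∈ pZ_p), and consequently U has optimal AHC: A_a(U)/(p²(p−1)) + A_c(U)/(p²−1) = (p³−p)/(p(p²−1)(p−1)). -/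

import Mathlib

open Finset

/-- Periodic Hamming correlation of two FHSs `X, Y : ZMod N → F` at shift `τ`. -/
def Hcorr {N : ℕ} [NeZero N] {F : Type*} [DecidableEq F]
    (X Y : ZMod N → F) (τ : ZMod N) : ℕ :=
  (Finset.univ.filter (fun t => X t = Y (t + τ))).card

/-- `N_X(a)`: number of occurrences of frequency `a` in the FHS `X`. -/
def countFreq {N : ℕ} [NeZero N] {F : Type*} [DecidableEq F]
    (X : ZMod N → F) (a : F) : ℕ :=
  (Finset.univ.filter (fun t => X t = a)).card

/-- `N_U(a)`: total number of occurrences of `a` in the FHS set `U`. -/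
def countFreqSet {N L : ℕ} [NeZero N] {F : Type*} [DecidableEq F]
    (U : Fin L → ZMod N → F) (a : F) : ℕ :=
  ∑ i : Fin L, countFreq (U i) a

/-- `S_a(U)`: sum of all out-of-phase Hamming autocorrelation values. -/
def Sa {N L : ℕ} [NeZero N] {F : Type*} [DecidableEq F]
    (U : Fin L → ZMod N → F) : ℕ :=
  ∑ i : Fin L, ∑ τ ∈ Finset.univ \ {(0 : ZMod N)}, Hcorr (U i) (U i) τ

/-- `S_c(U)`: sum of all Hamming crosscorrelation values (ordered pairs `i ≠ j`). -/
def Sc {N L : ℕ} [NeZero N] {F : Type*} [DecidableEq F]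
    (U : Fin L → ZMod N → F) : ℕ :=
  ∑ i : Fin L, ∑ j ∈ Finset.univ \ {i}, ∑ τ : ZMod N, Hcorr (U i) (U j) τ

/-- Average Hamming autocorrelation `A_a(U) = S_a(U)/(L(N-1))`. -/
def Aa {N L : ℕ} [NeZero N] {F : Type*} [DecidableEq F]
    (U : Fin L → ZMod N → F) : ℚ :=
  (Sa U : ℚ) / ((L : ℚ) * ((N : ℚ) - 1))

/-- Average Hamming crosscorrelation `A_c(U) = S_c(U)/(L(L-1)N)`. -/
def Ac {N L : ℕ} [NeZero N] {F : Type*} [DecidableEq F]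
    (U : Fin L → ZMod N → F) : ℚ :=
  (Sc U : ℚ) / ((L : ℚ) * ((L : ℚ) - 1) * (N : ℚ))

/-- `H_a(U)`: maximum out-of-phase Hamming autocorrelation of the set `U`. -/
def Ha {N L : ℕ} [NeZero N] {F : Type*} [DecidableEq F]
    (U : Fin L → ZMod N → F) : ℕ :=
  Finset.univ.sup fun i => (Finset.univ \ {(0 : ZMod N)}).sup fun τ => Hcorr (U i) (U i) τ

/-- `H_c(U)`: maximum Hamming crosscorrelation of the set `U`. -/
def Hc {N L : ℕ} [NeZero N] {F : Type*} [DecidableEq F]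
    (U : Fin L → ZMod N → F) : ℕ :=
  Finset.univ.sup fun i => (Finset.univ \ {i}).sup fun j =>
    Finset.univ.sup fun τ => Hcorr (U i) (U j) τ

/-- `U` has optimal average Hamming correlation (meets the Peng et al. AHC bound with equality). -/
def optimalAHC {N L : ℕ} [NeZero N] {F : Type*} [Fintype F] [DecidableEq F]
    (U : Fin L → ZMod N → F) : Prop :=
  Aa U / ((N : ℚ) * ((L : ℚ) - 1)) + Ac U / ((N : ℚ) - 1)
    = ((N : ℚ) * L - Fintype.card F) /
      ((Fintype.card F : ℚ) * ((N : ℚ) - 1) * ((L : ℚ) - 1))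

/-- The cyclotomic class `C_r = {α^(Ml+r) : 0 ≤ l ≤ f-1}`. -/
def cycClass {F : Type*} [Monoid F] [DecidableEq F] (α : F) (M f r : ℕ) : Finset F :=
  (Finset.range f).image fun l => α ^ (M * l + r)

/-- The cyclotomic number `(i,j)_M = |(C_i + 1) ∩ C_j|`. -/
def cycNum {F : Type*} [Field F] [DecidableEq F] (α : F) (M f i j : ℕ) : ℕ :=
  (((cycClass α M f i).image fun x => x + 1) ∩ cycClass α M f j).card



section AuxKumar

private lemma sum_countFreq' {N : ℕ} [NeZero N] {F : Type*} [Fintype F] [DecidableEq F]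
    (X : ZMod N → F) : ∑ a : F, countFreq X a = N := by
  have := (Finset.card_eq_sum_card_fiberwise (f := X) (s := Finset.univ)
    (t := Finset.univ) (fun x _ => Finset.mem_univ _)).symm
  simpa [countFreq, ZMod.card] using this

private lemma sum_Hcorr' {N : ℕ} [NeZero N] {F : Type*} [Fintype F] [DecidableEq F]
    (X Y : ZMod N → F) :
    ∑ τ : ZMod N, Hcorr X Y τ = ∑ a : F, countFreq X a * countFreq Y a := by
  calc ∑ τ : ZMod N, Hcorr X Y τ
      = ∑ τ : ZMod N, ∑ t : ZMod N, if X t = Y (t + τ) then 1 else 0 := by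
        simp only [Hcorr, Finset.card_filter]
    _ = ∑ t : ZMod N, ∑ τ : ZMod N, if X t = Y (t + τ) then 1 else 0 := Finset.sum_comm
    _ = ∑ t : ZMod N, ∑ s : ZMod N, if X t = Y s then 1 else 0 := by
        refine Finset.sum_congr rfl fun t _ => ?_
        exact Fintype.sum_equiv (Equiv.addLeft t) _ _ (fun τ => rfl)
    _ = ∑ t : ZMod N, countFreq Y (X t) := by
        refine Finset.sum_congr rfl fun t _ => ?_
        simp only [countFreq, Finset.card_filter]
        exact Finset.sum_congr rfl fun s _ => by simp only [eq_comm]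
    _ = ∑ a : F, ∑ t ∈ Finset.univ.filter (fun t => X t = a), countFreq Y (X t) :=
        (Finset.sum_fiberwise _ _ _).symm
    _ = ∑ a : F, countFreq X a * countFreq Y a := by
        refine Finset.sum_congr rfl fun a _ => ?_
        rw [Finset.sum_congr rfl (fun t ht => by rw [(Finset.mem_filter.mp ht).2]),
          Finset.sum_const, smul_eq_mul]
        rfl

private lemma key_count' {p : ℕ} [NeZero p] [NeZero (p ^ 2)] (hp : p.Prime)
    (X : Fin p → ZMod (p ^ 2) → ZMod (p ^ 2))
    (hX : ∀ (i : Fin p) (t : ZMod (p ^ 2)),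
      X i t = ((p * (t.val / p) * (t.val % p) + p * (i : ℕ) : ℕ) : ZMod (p ^ 2)))
    (a : ZMod (p ^ 2)) (t : ZMod (p ^ 2)) :
    (∑ i : Fin p, if X i t = a then 1 else 0)
      = if ∃ c : ZMod (p ^ 2), a = (p : ZMod (p ^ 2)) * c then 1 else 0 := by
  have hp0 : 0 < p := hp.pos
  set d : ℕ := (t.val / p) * (t.val % p) with hd
  have hXit : ∀ i : Fin p, X i t = ((p * (d + (i : ℕ)) : ℕ) : ZMod (p ^ 2)) := by
    intro i
    rw [hX i t]
    congr 1
    ring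
  by_cases hcase : ∃ c : ZMod (p ^ 2), a = (p : ZMod (p ^ 2)) * c
  · rw [if_pos hcase]
    obtain ⟨c, rfl⟩ := hcase
    set k : ℕ := (c.val % p + (p - d % p)) % p with hk
    have hkp : k < p := Nat.mod_lt _ hp0
    have hmod : (d + k) % p = c.val % p := by
      have h1 : d % p < p := Nat.mod_lt _ hp0
      calc (d + k) % p
          = (d + (c.val % p + (p - d % p))) % p := by rw [hk, Nat.add_mod_mod]
        _ = (d % p + (c.val % p + (p - d % p))) % p := (Nat.mod_add_mod _ _ _).symm
        _ = (c.val % p + p) % p := by congr 1; omega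
        _ = c.val % p % p := by rw [Nat.add_mod_right]
        _ = c.val % p := Nat.mod_mod_of_dvd _ dvd_rfl
    have hXk : X ⟨k, hkp⟩ t = ((p * (d + k) : ℕ) : ZMod (p ^ 2)) := hXit ⟨k, hkp⟩
    have hval : X ⟨k, hkp⟩ t = (p : ZMod (p ^ 2)) * c := by
      rw [hXk]
      have : ((p * (d + k) : ℕ) : ZMod (p ^ 2)) = ((p * c.val : ℕ) : ZMod (p ^ 2)) := by
        rw [ZMod.natCast_eq_natCast_iff]
        have := Nat.ModEq.mul_left' (c := p) (hmod : (d + k) ≡ c.val [MOD p])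
        simpa [pow_two] using this
      rw [this]
      push_cast
      rw [ZMod.natCast_val, ZMod.cast_id]
    rw [Finset.sum_eq_single_of_mem ⟨k, hkp⟩ (Finset.mem_univ _)]
    · rw [if_pos hval]
    · intro j _ hj
      rw [if_neg]
      intro hcon
      apply hj
      have : ((p * (d + (j : ℕ)) : ℕ) : ZMod (p ^ 2)) = ((p * (d + k) : ℕ) : ZMod (p ^ 2)) := by
        rw [← hXit j, ← hXk, hcon, hval]
      rw [ZMod.natCast_eq_natCast_iff] at this
      have h2 : p * ((d + (j : ℕ)) % p) = p * ((d + k) % p) := by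
        unfold Nat.ModEq at this
        rwa [pow_two, Nat.mul_mod_mul_left, Nat.mul_mod_mul_left] at this
      have h3 : (d + (j : ℕ)) % p = (d + k) % p := Nat.eq_of_mul_eq_mul_left hp0 h2
      have h4 : (j : ℕ) % p = k % p :=
        Nat.ModEq.add_left_cancel' d (h3 : (d + (j : ℕ)) ≡ (d + k) [MOD p])
      have hj2 : (j : ℕ) = k := by
        rwa [Nat.mod_eq_of_lt j.isLt, Nat.mod_eq_of_lt hkp] at h4
      exact Fin.ext hj2
  · rw [if_neg hcase]
    refine Finset.sum_eq_zero fun i _ => ?_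
    rw [if_neg]
    intro hcon
    exact hcase ⟨((d + (i : ℕ) : ℕ) : ZMod (p ^ 2)), by rw [← hcon, hXit]; push_cast; ring⟩

end AuxKumar

/-- Example 8 (Kumar's FHS set) is uniformly distributed, hence has optimal AHC. -/
theorem kumar_FHS_set_optimal_AHC {p : ℕ} [NeZero p] [NeZero (p ^ 2)]
    (hp : p.Prime) (hodd : Odd p)
    (X : Fin p → ZMod (p ^ 2) → ZMod (p ^ 2))
    (hX : ∀ (i : Fin p) (t : ZMod (p ^ 2)),
      X i t = ((p * (t.val / p) * (t.val % p) + p * (i : ℕ) : ℕ) : ZMod (p ^ 2))) :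
    (∀ a : ZMod (p ^ 2), (∃ c : ZMod (p ^ 2), a = (p : ZMod (p ^ 2)) * c) →
      countFreqSet X a = p ^ 2) ∧
    Aa X / ((p : ℚ) ^ 2 * ((p : ℚ) - 1)) + Ac X / ((p : ℚ) ^ 2 - 1)
      = ((p : ℚ) ^ 3 - (p : ℚ)) / ((p : ℚ) * ((p : ℚ) ^ 2 - 1) * ((p : ℚ) - 1)) := by
  -- uniform distribution
  have huni : ∀ a : ZMod (p ^ 2), countFreqSet X a =
      if ∃ c : ZMod (p ^ 2), a = (p : ZMod (p ^ 2)) * c then p ^ 2 else 0 := by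
    intro a
    calc countFreqSet X a
        = ∑ i : Fin p, ∑ t : ZMod (p ^ 2), if X i t = a then 1 else 0 := by
          simp only [countFreqSet, countFreq, Finset.card_filter]
      _ = ∑ t : ZMod (p ^ 2), ∑ i : Fin p, if X i t = a then 1 else 0 := Finset.sum_comm
      _ = ∑ _t : ZMod (p ^ 2),
            (if ∃ c : ZMod (p ^ 2), a = (p : ZMod (p ^ 2)) * c then 1 else 0) :=
          Finset.sum_congr rfl fun t _ => key_count' hp X hX a t
      _ = _ := by
          rw [Finset.sum_const, Finset.card_univ, ZMod.card]
          split_ifs <;> simp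
  have hdich : ∀ a : ZMod (p ^ 2),
      countFreqSet X a * countFreqSet X a = p ^ 2 * countFreqSet X a := by
    intro a
    rw [huni a]
    split_ifs <;> simp
  have hsumU : ∑ a : ZMod (p ^ 2), countFreqSet X a = p ^ 3 := by
    unfold countFreqSet
    rw [Finset.sum_comm]
    calc ∑ i : Fin p, ∑ a : ZMod (p ^ 2), countFreq (X i) a
        = ∑ _i : Fin p, p ^ 2 := Finset.sum_congr rfl fun i _ => sum_countFreq' _
      _ = p ^ 3 := by
          rw [Finset.sum_const, Finset.card_univ, Fintype.card_fin, smul_eq_mul]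
          ring
  have htotal : ∑ i : Fin p, ∑ j : Fin p, ∑ τ : ZMod (p ^ 2),
      Hcorr (X i) (X j) τ = p ^ 5 := by
    calc ∑ i : Fin p, ∑ j : Fin p, ∑ τ : ZMod (p ^ 2), Hcorr (X i) (X j) τ
        = ∑ i : Fin p, ∑ j : Fin p, ∑ a : ZMod (p ^ 2),
            countFreq (X i) a * countFreq (X j) a :=
          Finset.sum_congr rfl fun i _ => Finset.sum_congr rfl fun j _ => sum_Hcorr' _ _
      _ = ∑ i : Fin p, ∑ a : ZMod (p ^ 2), ∑ j : Fin p,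
            countFreq (X i) a * countFreq (X j) a :=
          Finset.sum_congr rfl fun i _ => Finset.sum_comm
      _ = ∑ a : ZMod (p ^ 2), ∑ i : Fin p, ∑ j : Fin p,
            countFreq (X i) a * countFreq (X j) a := Finset.sum_comm
      _ = ∑ a : ZMod (p ^ 2), countFreqSet X a * countFreqSet X a := by
          refine Finset.sum_congr rfl fun a _ => ?_
          rw [countFreqSet, Finset.sum_mul_sum]
      _ = ∑ a : ZMod (p ^ 2), p ^ 2 * countFreqSet X a :=
          Finset.sum_congr rfl fun a _ => hdich a
      _ = p ^ 2 * ∑ a : ZMod (p ^ 2), countFreqSet X a := by rw [Finset.mul_sum]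
      _ = p ^ 5 := by rw [hsumU]; ring
  have hH0 : ∀ i : Fin p, Hcorr (X i) (X i) 0 = p ^ 2 := by
    intro i
    simp [Hcorr, ZMod.card]
  have hsplit : Sc X + (Sa X + p * p ^ 2) = p ^ 5 := by
    rw [← htotal]
    unfold Sa Sc
    have hterm : ∀ i : Fin p,
        (∑ j ∈ Finset.univ \ {i}, ∑ τ : ZMod (p ^ 2), Hcorr (X i) (X j) τ) +
          ((∑ τ ∈ Finset.univ \ {(0 : ZMod (p ^ 2))}, Hcorr (X i) (X i) τ) + p ^ 2)
        = ∑ j : Fin p, ∑ τ : ZMod (p ^ 2), Hcorr (X i) (X j) τ := by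
      intro i
      rw [Finset.sum_eq_sum_sdiff_singleton_add (Finset.mem_univ i)
        (fun j => ∑ τ : ZMod (p ^ 2), Hcorr (X i) (X j) τ)]
      congr 1
      rw [Finset.sum_eq_sum_sdiff_singleton_add (Finset.mem_univ (0 : ZMod (p ^ 2)))
        (fun τ => Hcorr (X i) (X i) τ), hH0 i]
    calc (∑ i : Fin p, ∑ j ∈ Finset.univ \ {i}, ∑ τ : ZMod (p ^ 2), Hcorr (X i) (X j) τ) +
          ((∑ i : Fin p, ∑ τ ∈ Finset.univ \ {(0 : ZMod (p ^ 2))}, Hcorr (X i) (X i) τ) +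
            p * p ^ 2)
        = ∑ i : Fin p,
            ((∑ j ∈ Finset.univ \ {i}, ∑ τ : ZMod (p ^ 2), Hcorr (X i) (X j) τ) +
              ((∑ τ ∈ Finset.univ \ {(0 : ZMod (p ^ 2))}, Hcorr (X i) (X i) τ) + p ^ 2)) := by
          rw [Finset.sum_add_distrib, Finset.sum_add_distrib, Finset.sum_const,
            Finset.card_univ, Fintype.card_fin, smul_eq_mul]
      _ = ∑ i : Fin p, ∑ j : Fin p, ∑ τ : ZMod (p ^ 2), Hcorr (X i) (X j) τ :=
          Finset.sum_congr rfl fun i _ => hterm i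
  have hSaSc : (Sa X : ℚ) + (Sc X : ℚ) = (p : ℚ) ^ 5 - (p : ℚ) ^ 3 := by
    have h := congrArg (fun n : ℕ => (n : ℚ)) hsplit
    push_cast at h
    linarith
  have hp3 : 3 ≤ p := by
    have h2 : p ≠ 2 := by
      intro h
      rw [h, Nat.odd_iff] at hodd
      norm_num at hodd
    have := hp.two_le
    omega
  have hq3 : (3 : ℚ) ≤ (p : ℚ) := by exact_mod_cast hp3
  have hq0 : (p : ℚ) ≠ 0 := by linarith
  have hq1 : (p : ℚ) - 1 ≠ 0 := by intro h; linarith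
  have hqq : (p : ℚ) ^ 2 - 1 ≠ 0 := by
    intro h
    nlinarith
  constructor
  · intro a ha
    rw [huni a, if_pos ha]
  · have key : Aa X / ((p : ℚ) ^ 2 * ((p : ℚ) - 1)) + Ac X / ((p : ℚ) ^ 2 - 1)
        = ((Sa X : ℚ) + (Sc X : ℚ)) / ((p : ℚ) ^ 3 * ((p : ℚ) ^ 2 - 1) * ((p : ℚ) - 1)) := by
      rw [Aa, Ac]
      push_cast
      field_simp
    rw [key, hSaSc]
    rw [div_eq_div_iff (by positivity) (by
      intro h
      apply hq0
      nlinarith [sq_nonneg ((p : ℚ) - 1), sq_nonneg ((p : ℚ) + 1)])]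
    ring
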